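/- arXiv:2211.10203 — 2 statements merged into one kernel-verified Lean document; each statement's English description precedes it below -/
import Mathlib

section
/- Let p ≥ M ≥ 1, let U be a real p×M matrix with orthonormal columns (UᵀU = I_M), let Λ be an M×M diagonal matrix with nonnegative diagonal entries, let c > 0 and a ≥ 0, and let Σ̄ be a p×p real symmetric positive semidefinite matrix. Then tr((c·I_p + a·U Λ Uᵀ)^{−1/2}·Σ̄) ≥ c^{−1/2}·(tr(Σ̄) − tr(Uᵀ Σ̄ U)) ≥ c^{−1/2}·(tr(Σ̄) − M·‖Σ̄‖). -/
open Matrix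
open scoped Matrix.Norms.L2Operator

section Aux

variable {p M : ℕ}

noncomputable def auxF (U : Matrix (Fin p) (Fin M) ℝ) (f : Fin M → ℝ) (r : ℝ) :
    Matrix (Fin p) (Fin p) ℝ :=
  r • ((1 : Matrix (Fin p) (Fin p) ℝ) - U * Uᵀ) + U * diagonal f * Uᵀ

lemma auxPU (U : Matrix (Fin p) (Fin M) ℝ) (hU : Uᵀ * U = 1) :
    ((1 : Matrix (Fin p) (Fin p) ℝ) - U * Uᵀ) * U = 0 := by
  rw [Matrix.sub_mul, Matrix.one_mul, Matrix.mul_assoc, hU, Matrix.mul_one, sub_self]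

lemma auxUP (U : Matrix (Fin p) (Fin M) ℝ) (hU : Uᵀ * U = 1) :
    Uᵀ * ((1 : Matrix (Fin p) (Fin p) ℝ) - U * Uᵀ) = 0 := by
  rw [Matrix.mul_sub, Matrix.mul_one, ← Matrix.mul_assoc, hU, Matrix.one_mul, sub_self]

lemma auxF_mul (U : Matrix (Fin p) (Fin M) ℝ) (hU : Uᵀ * U = 1) (f g : Fin M → ℝ) (r r' : ℝ) :
    auxF U f r * auxF U g r' = auxF U (f * g) (r * r') := by
  have hPU := auxPU U hU
  have hUP := auxUP U hU
  have h1 : ((1 : Matrix (Fin p) (Fin p) ℝ) - U * Uᵀ) *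
      ((1 : Matrix (Fin p) (Fin p) ℝ) - U * Uᵀ) = (1 - U * Uᵀ) := by
    rw [Matrix.mul_sub, Matrix.mul_one, ← Matrix.mul_assoc, hPU, Matrix.zero_mul, sub_zero]
  have h2 : ((1 : Matrix (Fin p) (Fin p) ℝ) - U * Uᵀ) * (U * diagonal g * Uᵀ) = 0 := by
    rw [← Matrix.mul_assoc, ← Matrix.mul_assoc, hPU, Matrix.zero_mul, Matrix.zero_mul]
  have h3 : (U * diagonal f * Uᵀ) * ((1 : Matrix (Fin p) (Fin p) ℝ) - U * Uᵀ) = 0 := by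
    rw [Matrix.mul_assoc, Matrix.mul_assoc, hUP, Matrix.mul_zero, Matrix.mul_zero]
  have h4 : (U * diagonal f * Uᵀ) * (U * diagonal g * Uᵀ) = U * diagonal (f * g) * Uᵀ := by
    simp only [Matrix.mul_assoc]
    rw [← Matrix.mul_assoc Uᵀ U, hU, Matrix.one_mul, ← Matrix.mul_assoc (diagonal f),
      diagonal_mul_diagonal]
    rfl
  simp only [auxF, Matrix.add_mul, Matrix.mul_add, Matrix.smul_mul, Matrix.mul_smul, h1, h2, h3,
    h4, smul_zero, add_zero, zero_add, smul_smul, mul_comm r' r]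

lemma auxF_one (U : Matrix (Fin p) (Fin M) ℝ) : auxF U (1 : Fin M → ℝ) 1 = 1 := by
  have h : diagonal (1 : Fin M → ℝ) = 1 := diagonal_one
  simp only [auxF, one_smul, h, Matrix.mul_one]
  rw [sub_add_cancel]

lemma auxF_posSemidef (U : Matrix (Fin p) (Fin M) ℝ) (hU : Uᵀ * U = 1) (f : Fin M → ℝ)
    (hf : ∀ i, 0 ≤ f i) (r : ℝ) (hr : 0 ≤ r) : (auxF U f r).PosSemidef := by
  have hQ : ((1 : Matrix (Fin p) (Fin p) ℝ) - U * Uᵀ).PosSemidef := by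
    have hsym : ((1 : Matrix (Fin p) (Fin p) ℝ) - U * Uᵀ)ᴴ = 1 - U * Uᵀ := by
      simp [conjTranspose_eq_transpose_of_trivial, transpose_sub, transpose_mul, transpose_one]
    have h := posSemidef_conjTranspose_mul_self ((1 : Matrix (Fin p) (Fin p) ℝ) - U * Uᵀ)
    rwa [hsym, Matrix.mul_sub, Matrix.mul_one, Matrix.sub_mul, Matrix.one_mul,
      Matrix.mul_assoc, ← Matrix.mul_assoc Uᵀ, hU, Matrix.one_mul, sub_self, sub_zero] at h
  have hrQ : (r • ((1 : Matrix (Fin p) (Fin p) ℝ) - U * Uᵀ)).PosSemidef := by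
    refine PosSemidef.of_dotProduct_mulVec_nonneg ?_ fun x => ?_
    · have h1 := hQ.1
      simp only [Matrix.IsHermitian] at h1 ⊢
      rw [conjTranspose_smul, h1, star_trivial]
    · have := hQ.dotProduct_mulVec_nonneg x
      rw [smul_mulVec, dotProduct_smul]
      exact smul_nonneg hr this
  have hD : (U * diagonal f * Uᵀ).PosSemidef := by
    have h := (PosSemidef.diagonal (n := Fin M) (fun i => hf i : 0 ≤ f)).mul_mul_conjTranspose_same U
    rwa [conjTranspose_eq_transpose_of_trivial] at h
  exact hrQ.add hD

end Aux

/-- The positive semidefinite square root of a real matrix (zero junk value when the matrix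
is not positive semidefinite). -/
noncomputable def matSqrt {n : Type*} [Fintype n] [DecidableEq n]
    (A : Matrix n n ℝ) : Matrix n n ℝ :=
  letI := Classical.propDecidable
  if h : A.PosSemidef then
    h.isHermitian.eigenvectorUnitary.1 * diagonal ((↑) ∘ Real.sqrt ∘ h.isHermitian.eigenvalues) *
      (star h.isHermitian.eigenvectorUnitary : Matrix n n ℝ) else 0

/-- `A^{−1/2}`: the inverse of the positive semidefinite square root. -/
noncomputable def matInvSqrt {n : Type*} [Fintype n] [DecidableEq n]
    (A : Matrix n n ℝ) : Matrix n n ℝ :=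
  (matSqrt A)⁻¹

lemma matSqrt_eq_of_mul_self {n : Type*} [Fintype n] [DecidableEq n]
    (A S : Matrix n n ℝ) (hA : A.PosSemidef) (hS : S.PosSemidef) (hSS : S * S = A) :
    matSqrt A = S := by
  rw [matSqrt, dif_pos hA]
  obtain rfl : ‹DecidableEq n› = (fun a b => Classical.propDecidable (a = b)) :=
    Subsingleton.elim _ _
  letI : DecidableEq n := fun a b => Classical.propDecidable (a = b)
  open scoped MatrixOrder in
  have h := hA.isHermitian.cfc_eq Real.sqrt
  rw [IsHermitian.cfc, Unitary.conjStarAlgAut_apply] at h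
  open scoped MatrixOrder in
  trans cfc Real.sqrt A
  · exact h.symm
  open scoped MatrixOrder in
  rw [← cfcₙ_eq_cfc (hf0 := Real.sqrt_zero), ← CFC.sqrt_eq_real_sqrt A hA.nonneg]
  open scoped MatrixOrder in
  exact CFC.sqrt_unique hSS hS.nonneg

/-- For `U` a `p×M` matrix with orthonormal columns, `Λ = diagonal d` with
`d ≥ 0`, `c > 0`, `a ≥ 0`, and `Σ̄` symmetric positive semidefinite,
`tr((c·I_p + a·U Λ Uᵀ)^{−1/2}·Σ̄) ≥ c^{−1/2}·(tr Σ̄ − tr(Uᵀ Σ̄ U)) ≥ c^{−1/2}·(tr Σ̄ − M·‖Σ̄‖)`. -/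
theorem trace_invsqrt_low_rank_lower_bound
    (p M : ℕ) (hM : 1 ≤ M) (hMp : M ≤ p)
    (U : Matrix (Fin p) (Fin M) ℝ) (hU : Uᵀ * U = 1)
    (d : Fin M → ℝ) (hd : ∀ i, 0 ≤ d i) (c a : ℝ) (hc : 0 < c) (ha : 0 ≤ a)
    (Sbar : Matrix (Fin p) (Fin p) ℝ) (hSbar : Sbar.PosSemidef) :
    (matInvSqrt (c • (1 : Matrix (Fin p) (Fin p) ℝ) + a • (U * diagonal d * Uᵀ)) *
        Sbar).trace ≥ (Real.sqrt c)⁻¹ * (Sbar.trace - (Uᵀ * Sbar * U).trace) ∧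
      (Real.sqrt c)⁻¹ * (Sbar.trace - (Uᵀ * Sbar * U).trace) ≥
        (Real.sqrt c)⁻¹ * (Sbar.trace - (M : ℝ) * ‖Sbar‖) := by
  set A : Matrix (Fin p) (Fin p) ℝ :=
    c • (1 : Matrix (Fin p) (Fin p) ℝ) + a • (U * diagonal d * Uᵀ) with hAdef
  have hcad : ∀ i, 0 < c + a * d i := fun i =>
    lt_of_lt_of_le hc (le_add_of_nonneg_right (mul_nonneg ha (hd i)))
  set s : Fin M → ℝ := fun i => Real.sqrt (c + a * d i) with hsdef
  have hs_pos : ∀ i, 0 < s i := fun i => Real.sqrt_pos.2 (hcad i)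
  -- A as auxF
  have hA : A = auxF U (fun i => c + a * d i) c := by
    have hdiag : (diagonal (fun i => c + a * d i) : Matrix (Fin M) (Fin M) ℝ)
        = c • 1 + a • diagonal d := by
      ext i j
      by_cases h : i = j <;>
        simp [diagonal_apply, h, Matrix.one_apply, Matrix.add_apply, Matrix.smul_apply]
    rw [auxF, hdiag, Matrix.mul_add, Matrix.add_mul, Matrix.mul_smul, Matrix.smul_mul,
      Matrix.mul_one, Matrix.mul_smul, Matrix.smul_mul, smul_sub]
    rw [hAdef]
    abel
  have hApsd : A.PosSemidef := by
    rw [hA]; exact auxF_posSemidef U hU _ (fun i => (hcad i).le) c hc.le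
  set S : Matrix (Fin p) (Fin p) ℝ := auxF U s (Real.sqrt c) with hSdef
  set T : Matrix (Fin p) (Fin p) ℝ :=
    auxF U (fun i => (s i)⁻¹) ((Real.sqrt c)⁻¹) with hTdef
  have hSS : S * S = A := by
    have h1 : s * s = fun i => c + a * d i :=
      funext fun i => Real.mul_self_sqrt (hcad i).le
    rw [hSdef, auxF_mul U hU, h1, Real.mul_self_sqrt hc.le, hA]
  have hSpsd : S.PosSemidef :=
    auxF_posSemidef U hU s (fun i => (hs_pos i).le) _ (Real.sqrt_nonneg c)
  have hsqrt : matSqrt A = S := by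
    exact matSqrt_eq_of_mul_self A S hApsd hSpsd hSS
  have hST : S * T = 1 := by
    rw [hSdef, hTdef, auxF_mul U hU]
    have h1 : (s * fun i => (s i)⁻¹) = (1 : Fin M → ℝ) := by
      funext i
      exact mul_inv_cancel₀ (hs_pos i).ne'
    have h2 : Real.sqrt c * (Real.sqrt c)⁻¹ = 1 :=
      mul_inv_cancel₀ (Real.sqrt_pos.2 hc).ne'
    rw [h1, h2, auxF_one]
  have hinv : matInvSqrt A = T := by
    rw [matInvSqrt, hsqrt]
    exact Matrix.inv_eq_right_inv hST
  -- trace identities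
  have htrP : (U * Uᵀ * Sbar).trace = (Uᵀ * Sbar * U).trace := by
    rw [Matrix.mul_assoc, Matrix.trace_mul_comm]
  have htr1 : (((1 : Matrix (Fin p) (Fin p) ℝ) - U * Uᵀ) * Sbar).trace
      = Sbar.trace - (Uᵀ * Sbar * U).trace := by
    rw [Matrix.sub_mul, Matrix.one_mul, Matrix.trace_sub, htrP]
  -- B := Uᵀ Sbar U is psd
  have hB : (Uᵀ * Sbar * U).PosSemidef := by
    have h := hSbar.conjTranspose_mul_mul_same U
    rwa [conjTranspose_eq_transpose_of_trivial] at h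
  have htrD : 0 ≤ ((U * diagonal (fun i => (s i)⁻¹) * Uᵀ) * Sbar).trace := by
    have hcyc : ((U * diagonal (fun i => (s i)⁻¹) * Uᵀ) * Sbar).trace
        = (diagonal (fun i => (s i)⁻¹) * (Uᵀ * Sbar * U)).trace := by
      rw [Matrix.mul_assoc, Matrix.trace_mul_comm, ← Matrix.mul_assoc, ← Matrix.mul_assoc,
        Matrix.trace_mul_comm, Matrix.mul_assoc, Matrix.mul_assoc]
      rw [Matrix.mul_assoc Uᵀ Sbar U]
    rw [hcyc, Matrix.trace]
    refine Finset.sum_nonneg fun i _ => ?_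
    have hdi : (diagonal (fun i => (s i)⁻¹) * (Uᵀ * Sbar * U)).diag i
        = (s i)⁻¹ * (Uᵀ * Sbar * U) i i := by
      simp [Matrix.diag, Matrix.diagonal_mul]
    rw [hdi]
    have hdiagB : 0 ≤ (Uᵀ * Sbar * U) i i := by
      simpa using hB.dotProduct_mulVec_nonneg (Pi.single i 1)
    exact mul_nonneg (inv_nonneg.2 (hs_pos i).le) hdiagB
  have htrT : (T * Sbar).trace = (Real.sqrt c)⁻¹ * (Sbar.trace - (Uᵀ * Sbar * U).trace)
      + ((U * diagonal (fun i => (s i)⁻¹) * Uᵀ) * Sbar).trace := by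
    rw [hTdef, auxF, Matrix.add_mul, Matrix.trace_add, Matrix.smul_mul, Matrix.trace_smul,
      htr1, smul_eq_mul]
  -- second inequality: each diagonal entry of B bounded by ‖Sbar‖
  have hdiag_le : ∀ i, (Uᵀ * Sbar * U) i i ≤ ‖Sbar‖ := by
    intro i
    set x : EuclideanSpace ℝ (Fin p) := WithLp.toLp 2 (fun j => U j i) with hxdef
    have hxx : (inner ℝ x x : ℝ) = 1 := by
      have h := congrArg (fun A : Matrix (Fin M) (Fin M) ℝ => A i i) hU
      simp only [Matrix.mul_apply, Matrix.transpose_apply, Matrix.one_apply_eq] at h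
      simp only [PiLp.inner_apply, RCLike.inner_apply, conj_trivial]
      exact h
    have hnx : ‖x‖ = 1 := by
      have h2 : ‖x‖ ^ 2 = 1 := by rw [← real_inner_self_eq_norm_sq, hxx]
      nlinarith [norm_nonneg x]
    set y : EuclideanSpace ℝ (Fin p) := (EuclideanSpace.equiv (Fin p) ℝ).symm (Sbar *ᵥ x)
      with hydef
    have hBi : (Uᵀ * Sbar * U) i i = (inner ℝ x y : ℝ) := by
      have hyj : ∀ j, y j = ∑ k, Sbar j k * U k i := fun j => rfl
      simp only [PiLp.inner_apply, RCLike.inner_apply, conj_trivial, hyj]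
      rw [Matrix.mul_assoc, Matrix.mul_apply]
      refine Finset.sum_congr rfl fun j _ => ?_
      rw [Matrix.transpose_apply, Matrix.mul_apply]
      exact mul_comm _ _
    have hy_le : ‖y‖ ≤ ‖Sbar‖ * ‖x‖ := Matrix.l2_opNorm_mulVec Sbar x
    calc (Uᵀ * Sbar * U) i i = (inner ℝ x y : ℝ) := hBi
      _ ≤ ‖x‖ * ‖y‖ := real_inner_le_norm x y
      _ ≤ ‖x‖ * (‖Sbar‖ * ‖x‖) := by
          exact mul_le_mul_of_nonneg_left hy_le (norm_nonneg x)
      _ = ‖Sbar‖ := by rw [hnx]; ring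
  have htrB_le : (Uᵀ * Sbar * U).trace ≤ (M : ℝ) * ‖Sbar‖ := by
    rw [Matrix.trace]
    calc ∑ i, (Uᵀ * Sbar * U).diag i ≤ ∑ _i : Fin M, ‖Sbar‖ :=
          Finset.sum_le_sum fun i _ => hdiag_le i
      _ = (M : ℝ) * ‖Sbar‖ := by simp [Finset.sum_const, nsmul_eq_mul]
  constructor
  · rw [hinv, htrT]
    exact le_add_of_nonneg_right htrD
  · exact mul_le_mul_of_nonneg_left (sub_le_sub_left htrB_le _)
      (inv_nonneg.2 (Real.sqrt_nonneg c))
end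

section
/- Let X and S be p×p real symmetric positive semidefinite matrices. Then |tr(S^{1/2}·(X^{1/2} − I_p)·S^{1/2})| ≤ ‖S‖·√(p·tr((X − I_p)²)). -/
open Matrix
open scoped Matrix.Norms.L2Operator

/-- The positive semidefinite square root of a positive semidefinite matrix (the definition
`Matrix.PosSemidef.sqrt` of the older Mathlib, removed since). -/
noncomputable def Matrix.PosSemidef.sqrt {n 𝕜 : Type*} [Fintype n] [RCLike 𝕜] [PartialOrder 𝕜]
    [DecidableEq n] {A : Matrix n n 𝕜} (hA : A.PosSemidef) : Matrix n n 𝕜 :=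
  hA.1.eigenvectorUnitary.1 * diagonal ((↑) ∘ (√·) ∘ hA.1.eigenvalues) *
    (star hA.1.eigenvectorUnitary : Matrix n n 𝕜)

private lemma trace_conj_aux {p : ℕ} (U M : Matrix (Fin p) (Fin p) ℝ)
    (hU : star U * U = 1) : (U * M * star U).trace = M.trace := by
  rw [Matrix.trace_mul_comm (U * M) (star U), ← Matrix.mul_assoc, hU, one_mul]

/-- For symmetric positive semidefinite `X` and `S`,
`|tr(S^{1/2}·(X^{1/2} − I)·S^{1/2})| ≤ ‖S‖·√(p·tr((X − I)²))`. -/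
theorem trace_sqrt_perturbation_bound
    (p : ℕ) {X S : Matrix (Fin p) (Fin p) ℝ}
    (hX : X.PosSemidef) (hS : S.PosSemidef) :
    |(hS.sqrt * (hX.sqrt - 1) * hS.sqrt).trace| ≤
      ‖S‖ * Real.sqrt ((p : ℝ) * ((X - 1) * (X - 1)).trace) := by
  classical
  set U : Matrix (Fin p) (Fin p) ℝ := (hX.1.eigenvectorUnitary : Matrix (Fin p) (Fin p) ℝ) with hUdef
  have hUU : star U * U = 1 := Matrix.mem_unitaryGroup_iff'.mp hX.1.eigenvectorUnitary.2
  have hUU' : U * star U = 1 := Matrix.mem_unitaryGroup_iff.mp hX.1.eigenvectorUnitary.2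
  set ev : Fin p → ℝ := hX.1.eigenvalues with hevdef
  have hev : ∀ i, 0 ≤ ev i := hX.eigenvalues_nonneg
  set f : Fin p → ℝ := fun i => Real.sqrt (ev i) - 1 with hfdef
  set g : Fin p → ℝ := fun i => ev i - 1 with hgdef
  set T : Matrix (Fin p) (Fin p) ℝ := star U * S * U with hTdef
  -- spectral decompositions
  have hXdecomp : X = U * Matrix.diagonal ev * star U := by
    have := hX.1.spectral_theorem
    simpa [RCLike.ofReal_real_eq_id, Function.comp] using this
  have hsqrt : hX.sqrt = U * Matrix.diagonal (fun i => Real.sqrt (ev i)) * star U := by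
    rw [Matrix.PosSemidef.sqrt]
    simp only [RCLike.ofReal_real_eq_id, Function.comp_def, id_eq, hUdef, hevdef]
  have hone : (1 : Matrix (Fin p) (Fin p) ℝ) = U * Matrix.diagonal (fun _ : Fin p => (1:ℝ)) * star U := by
    rw [Matrix.diagonal_one, mul_one, hUU']
  have hdiff : hX.sqrt - 1 = U * Matrix.diagonal f * star U := by
    rw [hsqrt]
    conv_lhs => rw [hone]
    rw [← Matrix.sub_mul, ← Matrix.mul_sub, Matrix.diagonal_sub]
  have hXdiff : X - 1 = U * Matrix.diagonal g * star U := by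
    rw [hXdecomp]
    conv_lhs => rw [hone]
    rw [← Matrix.sub_mul, ← Matrix.mul_sub, Matrix.diagonal_sub]
  -- trace of LHS
  have hSsq : hS.sqrt * hS.sqrt = S := by
    set V : Matrix (Fin p) (Fin p) ℝ := (hS.1.eigenvectorUnitary : Matrix (Fin p) (Fin p) ℝ) with hVdef
    have hVV : star V * V = 1 := Matrix.mem_unitaryGroup_iff'.mp hS.1.eigenvectorUnitary.2
    have hSdec : S = V * Matrix.diagonal hS.1.eigenvalues * star V := by
      have := hS.1.spectral_theorem
      simpa [RCLike.ofReal_real_eq_id, Function.comp] using this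
    have hsq : hS.sqrt = V * Matrix.diagonal (fun i => Real.sqrt (hS.1.eigenvalues i)) * star V := by
      rw [Matrix.PosSemidef.sqrt]
      simp only [RCLike.ofReal_real_eq_id, Function.comp_def, id_eq, hVdef]
    rw [hsq]
    conv_rhs => rw [hSdec]
    simp only [Matrix.mul_assoc]
    rw [← Matrix.mul_assoc (star V) V, hVV, one_mul,
      ← Matrix.mul_assoc (Matrix.diagonal _) (Matrix.diagonal _)]
    congr 2
    rw [Matrix.diagonal_mul_diagonal]
    congr 1
    funext i
    exact Real.mul_self_sqrt (hS.eigenvalues_nonneg i)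
  have htr1 : (hS.sqrt * (hX.sqrt - 1) * hS.sqrt).trace = ∑ i, T i i * f i := by
    rw [Matrix.trace_mul_comm (hS.sqrt * (hX.sqrt - 1)) hS.sqrt, ← Matrix.mul_assoc,
      hSsq, hdiff, ← Matrix.mul_assoc, ← Matrix.mul_assoc,
      Matrix.trace_mul_comm (S * U * Matrix.diagonal f) (star U), ← Matrix.mul_assoc,
      ← Matrix.mul_assoc, ← hTdef]
    simp [Matrix.trace, Matrix.mul_diagonal]
  -- trace of RHS
  have htr2 : ((X - 1) * (X - 1)).trace = ∑ i, g i ^ 2 := by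
    rw [hXdiff]
    have hmm : (U * Matrix.diagonal g * star U) * (U * Matrix.diagonal g * star U)
        = U * (Matrix.diagonal g * Matrix.diagonal g) * star U := by
      simp only [Matrix.mul_assoc]
      rw [← Matrix.mul_assoc (star U) U (Matrix.diagonal g * star U), hUU, one_mul]
    rw [hmm, trace_conj_aux U _ hUU, Matrix.diagonal_mul_diagonal, Matrix.trace_diagonal]
    simp [sq]
  -- diagonal entries of T are nonneg and bounded by ‖S‖
  have hTnonneg : ∀ i, 0 ≤ T i i := by
    intro i
    have : T i i = (fun j => U j i) ⬝ᵥ S *ᵥ (fun j => U j i) := by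
      simp [hTdef, Matrix.mul_apply, dotProduct, Matrix.mulVec, dotProduct,
        Finset.mul_sum, mul_comm, mul_assoc, mul_left_comm]
    rw [this]
    simpa using hS.dotProduct_mulVec_nonneg (fun j => U j i)
  have hScol : ∀ i, ∑ j, U j i ^ 2 = 1 := by
    intro i
    have := congrFun (congrFun hUU i) i
    simpa [Matrix.mul_apply, Matrix.one_apply, sq] using this
  have hTle : ∀ i, T i i ≤ ‖S‖ := by
    intro i
    set u : Fin p → ℝ := fun j => U j i with hudef
    set v : EuclideanSpace ℝ (Fin p) := (EuclideanSpace.equiv (Fin p) ℝ).symm u with hvdef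
    have hvnorm : ‖v‖ = 1 := by
      rw [EuclideanSpace.norm_eq]
      have : ∑ j, ‖v j‖ ^ 2 = 1 := by
        simpa [hvdef, hudef, Real.norm_eq_abs, sq_abs] using hScol i
      rw [this, Real.sqrt_one]
    have hTval : T i i = u ⬝ᵥ S *ᵥ u := by
      simp [hTdef, hudef, Matrix.mul_apply, dotProduct, Matrix.mulVec, dotProduct,
        Finset.mul_sum, mul_comm, mul_assoc, mul_left_comm]
    set w : EuclideanSpace ℝ (Fin p) := (EuclideanSpace.equiv (Fin p) ℝ).symm (S *ᵥ u) with hwdef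
    have hinner : T i i = inner ℝ v w := by
      rw [hTval]
      simp [PiLp.inner_apply, hvdef, hwdef, dotProduct, RCLike.inner_apply]
      exact Finset.sum_congr rfl fun _ _ => mul_comm _ _
    have hCS : inner ℝ v w ≤ ‖v‖ * ‖w‖ := real_inner_le_norm v w
    have hwle : ‖w‖ ≤ ‖S‖ * ‖v‖ := Matrix.l2_opNorm_mulVec S v
    rw [hinner]
    calc inner ℝ v w ≤ ‖v‖ * ‖w‖ := hCS
      _ ≤ ‖v‖ * (‖S‖ * ‖v‖) := by
          exact mul_le_mul_of_nonneg_left hwle (norm_nonneg v)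
      _ = ‖S‖ := by rw [hvnorm]; ring
  have hSnorm : (0:ℝ) ≤ ‖S‖ := norm_nonneg S
  -- pointwise eigenvalue bound
  have hfg : ∀ i, f i ^ 2 ≤ g i ^ 2 := by
    intro i
    have h1 : |f i| ≤ |g i| := by
      have hsq : Real.sqrt (ev i) ^ 2 = ev i := Real.sq_sqrt (hev i)
      have : g i = f i * (Real.sqrt (ev i) + 1) := by
        simp only [hfdef, hgdef]
        nlinarith [hsq]
      rw [this, abs_mul]
      have h2 : (1:ℝ) ≤ |Real.sqrt (ev i) + 1| := by
        rw [abs_of_nonneg (by positivity)]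
        nlinarith [Real.sqrt_nonneg (ev i)]
      nlinarith [abs_nonneg (f i)]
    calc f i ^ 2 = |f i| ^ 2 := (sq_abs _).symm
      _ ≤ |g i| ^ 2 := by nlinarith [abs_nonneg (f i), abs_nonneg (g i)]
      _ = g i ^ 2 := sq_abs _
  -- assemble
  rw [htr1, htr2]
  have step1 : |∑ i, T i i * f i| ≤ ‖S‖ * ∑ i, |f i| := by
    calc |∑ i, T i i * f i| ≤ ∑ i, |T i i * f i| := Finset.abs_sum_le_sum_abs _ _
      _ ≤ ∑ i, ‖S‖ * |f i| := by
          apply Finset.sum_le_sum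
          intro i _
          rw [abs_mul, abs_of_nonneg (hTnonneg i)]
          exact mul_le_mul_of_nonneg_right (hTle i) (abs_nonneg _)
      _ = ‖S‖ * ∑ i, |f i| := by rw [Finset.mul_sum]
  have step2 : ∑ i, |f i| ≤ Real.sqrt ((p:ℝ) * ∑ i, g i ^ 2) := by
    apply Real.le_sqrt_of_sq_le
    calc (∑ i, |f i|) ^ 2 ≤ ((Finset.univ : Finset (Fin p)).card : ℝ) * ∑ i, |f i| ^ 2 := by
          exact sq_sum_le_card_mul_sum_sq (s := Finset.univ) (f := fun i => |f i|)
      _ = (p:ℝ) * ∑ i, |f i| ^ 2 := by simp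
      _ ≤ (p:ℝ) * ∑ i, g i ^ 2 := by
          apply mul_le_mul_of_nonneg_left _ (by positivity)
          apply Finset.sum_le_sum
          intro i _
          rw [sq_abs]
          exact hfg i
  calc |∑ i, T i i * f i| ≤ ‖S‖ * ∑ i, |f i| := step1
    _ ≤ ‖S‖ * Real.sqrt ((p:ℝ) * ∑ i, g i ^ 2) := mul_le_mul_of_nonneg_left step2 hSnorm
end
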